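/- arXiv:2210.16826 — 3 statements merged into one kernel-verified Lean document; each statement's English description precedes it below -/
import Mathlib

section
/- Let p be an odd prime and c an element of F_p. Then the central trinomial coefficient T(p-1,0), computed in F_p, equals the quadratic character χ(c^2 - 4), where χ is the Legendre symbol viewed as a map F_p → F_p (with χ(0) = 0). -/
open Polynomial LaurentPolynomial Finset

/-- The trinomial coefficient: coefficient of `x^k` in `(x + c + x⁻¹)^n` over `R`. -/
noncomputable def triCoeff (R : Type*) [CommRing R] (c : R) (n : ℕ) (k : ℤ) : R :=
  (AddMonoidAlgebra.coeff ((LaurentPolynomial.T 1 + LaurentPolynomial.C c + LaurentPolynomial.T (-1)) ^ n :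
      LaurentPolynomial R) : ℤ →₀ R) k

lemma toLaurent_trinomial {R : Type*} [CommRing R] (c : R) :
    Polynomial.toLaurent (X ^ 2 + Polynomial.C c * X + 1 : R[X]) =
      (LaurentPolynomial.T 1 + LaurentPolynomial.C c + LaurentPolynomial.T (-1)) *
        LaurentPolynomial.T 1 := by
  rw [map_add, map_add, map_one, Polynomial.toLaurent_X_pow, Polynomial.toLaurent_C_mul_eq,
    Polynomial.toLaurent_X, add_mul, add_mul, ← T_add, ← T_add]
  norm_num [T_zero]

lemma triCoeff_eq {R : Type*} [CommRing R] (c : R) (n : ℕ) :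
    triCoeff R c n 0 = ((X ^ 2 + Polynomial.C c * X + 1 : R[X]) ^ n).coeff n := by
  have h : Polynomial.toLaurent ((X ^ 2 + Polynomial.C c * X + 1 : R[X]) ^ n) =
      (LaurentPolynomial.T 1 + LaurentPolynomial.C c + LaurentPolynomial.T (-1)) ^ n *
        LaurentPolynomial.T (n : ℤ) := by
    rw [map_pow, toLaurent_trinomial, mul_pow, T_pow, mul_one]
  have h2 := congrArg (fun f : LaurentPolynomial R => (AddMonoidAlgebra.coeff f : ℤ →₀ R) (n : ℤ)) h
  simp only [LaurentPolynomial.coeff_toLaurent] at h2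
  erw [Finsupp.mapDomain_apply Nat.castEmbedding.injective _ n] at h2
  rw [show (LaurentPolynomial.T (n : ℤ) : LaurentPolynomial R) =
    AddMonoidAlgebra.single (n : ℤ) (1 : R) from rfl,
    AddMonoidAlgebra.coeff_mul_single_apply, add_neg_cancel, mul_one] at h2
  rw [triCoeff, ← h2]
  rfl


section helpers

variable {p : ℕ} [Fact p.Prime]

lemma sum_pow_zmod_neg_one {i : ℕ} (hi : 0 < i) (h : (p - 1) ∣ i) :
    ∑ x : ZMod p, x ^ i = -1 := by
  have key : ∀ x : ZMod p, x ^ i = 1 - if x = 0 then 1 else 0 := by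
    intro x
    by_cases hx : x = 0
    · simp [hx, zero_pow hi.ne']
    · obtain ⟨k, rfl⟩ := h
      simp [hx, pow_mul, ZMod.pow_card_sub_one_eq_one hx]
  simp only [key]
  rw [Finset.sum_sub_distrib, Finset.sum_const, Finset.sum_ite_eq' _ (0 : ZMod p)]
  simp [ZMod.card, ZMod.natCast_self]

lemma sum_pow_zmod_zero {i : ℕ} (h : ¬ (p - 1) ∣ i) :
    ∑ x : ZMod p, x ^ i = 0 := by
  have hp1 : 0 < p - 1 := by
    have := (Fact.out (p := p.Prime)).two_le
    omega
  have hi : i ≠ 0 := by rintro rfl; exact h (dvd_zero _)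
  set r := i % (p - 1) with hr
  have hrlt : r < p - 1 := Nat.mod_lt _ hp1
  have hrne : r ≠ 0 := fun h0 => h (Nat.dvd_of_mod_eq_zero h0)
  have key : ∀ x : ZMod p, x ^ i = x ^ r := by
    intro x
    by_cases hx : x = 0
    · simp [hx, zero_pow hi, zero_pow hrne]
    · conv_lhs => rw [← Nat.mod_add_div i (p - 1)]
      rw [pow_add, pow_mul, ZMod.pow_card_sub_one_eq_one hx, one_pow, mul_one]
  simp only [key]
  have := FiniteField.sum_pow_lt_card_sub_one (ZMod p) r (by rwa [ZMod.card])
  exact this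

end helpers

theorem central_tri_p_sub_one' (p : ℕ) [Fact p.Prime] (hp : p ≠ 2) (c : ZMod p) :
    ((X ^ 2 + Polynomial.C c * X + 1 : (ZMod p)[X]) ^ (p - 1)).coeff (p - 1) =
      ((quadraticChar (ZMod p) (c ^ 2 - 4) : ℤ) : ZMod p) := by
  have hp' := Fact.out (p := p.Prime)
  have hp3 : 3 ≤ p := by
    rcases hp'.two_le.lt_or_eq with h | h
    · omega
    · omega
  set q := p - 1 with hq
  have hq1 : 1 ≤ q := by omega
  set f : (ZMod p)[X] := X ^ 2 + Polynomial.C c * X + 1 with hf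
  have hmonic : f.Monic := by
    unfold f; monicity!
  have hdegf : f.natDegree = 2 := by
    unfold f; compute_degree!
  have hfq_monic : (f ^ q).Monic := hmonic.pow _
  have hdeg : (f ^ q).natDegree = 2 * q := by
    rw [hmonic.natDegree_pow, hdegf, mul_comm]
  have hlead : (f ^ q).coeff (2 * q) = 1 := by
    have := hfq_monic
    rw [Polynomial.Monic, Polynomial.leadingCoeff, hdeg] at this
    exact this
  have h2z : (2 : ZMod p) ≠ 0 := by
    intro h2
    have : ((2 : ℕ) : ZMod p) = 0 := by exact_mod_cast h2
    rw [ZMod.natCast_eq_zero_iff] at this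
    have := (Nat.prime_dvd_prime_iff_eq hp' Nat.prime_two).mp this
    exact hp this
  -- N : number of roots of x^2+cx+1
  set N := (Finset.univ.filter fun x : ZMod p => x ^ 2 + c * x + 1 = 0).card with hN
  -- S : sum of (f^q).eval over ZMod p
  set S := ∑ x : ZMod p, (f ^ q).eval x with hS
  -- Way A
  have wayA : S = -(N : ZMod p) := by
    have heval : ∀ x : ZMod p, (f ^ q).eval x =
        1 - if x ^ 2 + c * x + 1 = 0 then 1 else 0 := by
      intro x
      rw [Polynomial.eval_pow]
      have : f.eval x = x ^ 2 + c * x + 1 := by simp [hf]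
      rw [this]
      by_cases hx : x ^ 2 + c * x + 1 = 0
      · rw [if_pos hx, hx, zero_pow (by omega : q ≠ 0), sub_self]
      · rw [if_neg hx, ZMod.pow_card_sub_one_eq_one hx, sub_zero]
    rw [hS]
    simp only [heval]
    rw [Finset.sum_sub_distrib, Finset.sum_const, Finset.sum_boole]
    simp [ZMod.card, ZMod.natCast_self, hN]
  -- Way B
  have wayB : S = -((f ^ q).coeff q) - 1 := by
    have hlt : (f ^ q).natDegree < 2 * q + 1 := by omega
    have : S = ∑ i ∈ range (2 * q + 1), (f ^ q).coeff i * ∑ x : ZMod p, x ^ i := by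
      rw [hS]
      simp only [Polynomial.eval_eq_sum_range' hlt]
      rw [Finset.sum_comm]
      simp [Finset.mul_sum]
    rw [this]
    have hsub : ({q, 2 * q} : Finset ℕ) ⊆ range (2 * q + 1) := by
      intro i hi
      simp only [Finset.mem_insert, Finset.mem_singleton] at hi
      rcases hi with rfl | rfl <;> simp [Finset.mem_range] <;> omega
    rw [← Finset.sum_subset hsub]
    · have hne : q ≠ 2 * q := by omega
      rw [Finset.sum_pair hne, hlead, mul_comm]
      rw [sum_pow_zmod_neg_one hq1 dvd_rfl, sum_pow_zmod_neg_one (by omega) ⟨2, by omega⟩]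
      ring
    · intro i hi hni
      simp only [Finset.mem_insert, Finset.mem_singleton, not_or] at hni
      obtain ⟨hiq, hi2q⟩ := hni
      rcases Nat.eq_zero_or_pos i with rfl | hipos
      · simp [Finset.card_univ, ZMod.card, ZMod.natCast_self]
      · rw [sum_pow_zmod_zero, mul_zero]
        rintro ⟨k, rfl⟩
        have hik : q * k < 2 * q + 1 := Finset.mem_range.mp hi
        have hk2 : k ≤ 2 := by
          by_contra hk
          push_neg at hk
          have h3 : q * 3 ≤ q * k := Nat.mul_le_mul_left q hk
          have := h3.trans_lt hik
          omega
        interval_cases k <;> omega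
  -- relate N to the quadratic character
  have hNchar : (N : ℤ) = quadraticChar (ZMod p) (c ^ 2 - 4) + 1 := by
    have hF : ringChar (ZMod p) ≠ 2 := by
      rw [ZMod.ringChar_zmod_n]; exact hp
    rw [← quadraticChar_card_sqrts hF (c ^ 2 - 4)]
    congr 1
    rw [hN]
    refine Finset.card_bij' (fun x _ => 2 * x + c) (fun y _ => (y - c) * 2⁻¹) ?_ ?_ ?_ ?_
    · intro x hx
      simp only [Finset.mem_filter] at hx
      rw [Set.mem_toFinset, Set.mem_setOf_eq]
      linear_combination 4 * hx.2
    · intro y hy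
      rw [Set.mem_toFinset, Set.mem_setOf_eq] at hy
      simp only [Finset.mem_filter, Finset.mem_univ, true_and]
      have key : ((y - c) * 2⁻¹) ^ 2 + c * ((y - c) * 2⁻¹) + 1 =
          (y ^ 2 - (c ^ 2 - 4)) * (2⁻¹ * 2⁻¹) := by
        field_simp
        ring
      rw [key, hy, sub_self, zero_mul]
    · intro x hx
      linear_combination x * mul_inv_cancel₀ h2z
    · intro y hy
      linear_combination (y - c) * mul_inv_cancel₀ h2z
  -- conclude
  have hfinal : -(N : ZMod p) = -((f ^ q).coeff q) - 1 := by rw [← wayA, wayB]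
  have hNp : (N : ZMod p) = ((quadraticChar (ZMod p) (c ^ 2 - 4) : ℤ) : ZMod p) + 1 := by
    have := congrArg (fun z : ℤ => (z : ZMod p)) hNchar
    push_cast at this ⊢
    exact this
  rw [hNp] at hfinal
  linear_combination hfinal

theorem central_tri_p_sub_one (p : ℕ) [Fact p.Prime] (hp : p ≠ 2) (c : ZMod p) :
    triCoeff (ZMod p) c (p - 1) 0 =
      ((quadraticChar (ZMod p) (c ^ 2 - 4) : ℤ) : ZMod p) := by
  rw [triCoeff_eq]
  exact central_tri_p_sub_one' p hp c
end

section
/- Let p be an odd prime and c an element of F_p with c^2 - 4 a nonzero square in F_p. Then the trinomial coefficient T(p-1,1), computed in F_p, equals 0. -/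
open LaurentPolynomial Polynomial Finset

lemma coeff_T_mul' {R : Type*} [CommRing R] (m : ℤ) (f : LaurentPolynomial R) (y : ℤ) :
    (AddMonoidAlgebra.coeff (T m * f : LaurentPolynomial R) : ℤ →₀ R) y =
      (AddMonoidAlgebra.coeff f : ℤ →₀ R) (-m + y) :=
  (AddMonoidAlgebra.coeff_single_mul_apply f 1 m y).trans (one_mul _)

lemma coeff_toLaurent' {R : Type*} [CommRing R] (f : R[X]) (n : ℕ) :
    (AddMonoidAlgebra.coeff (toLaurent f : LaurentPolynomial R) : ℤ →₀ R) (n : ℤ) = f.coeff n := by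
  rw [coeff_toLaurent]
  exact Finsupp.mapDomain_apply Nat.castEmbedding.injective _ n

lemma factor_laurent {R : Type*} [CommRing R] (c : R) :
    (T 1 + LaurentPolynomial.C c + T (-1) : LaurentPolynomial R) =
      T (-1) * toLaurent (Polynomial.X ^ 2 + Polynomial.C c * Polynomial.X + 1) := by
  simp only [map_add, map_mul, map_pow, map_one, Polynomial.toLaurent_X, Polynomial.toLaurent_C,
    T_pow, mul_one]
  rw [mul_add, mul_add, mul_one, ← T_add, mul_comm (LaurentPolynomial.C c) (T 1), ← mul_assoc,
    ← T_add, neg_add_cancel, T_zero, one_mul]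
  norm_num

lemma pow_eq_sum' {p : ℕ} [Fact p.Prime] (a : ZMod p) :
    (Polynomial.X - Polynomial.C a) ^ (p - 1) =
      ∑ i ∈ Finset.range p, Polynomial.monomial i (a ^ (p - 1 - i)) := by
  have hX : (Polynomial.X - Polynomial.C a : (ZMod p)[X]) ≠ 0 := Polynomial.X_sub_C_ne_zero a
  apply mul_right_cancel₀ hX
  rw [← pow_succ, Nat.sub_add_cancel (Fact.out (p := p.Prime)).one_lt.le]
  have h := geom_sum₂_mul (Polynomial.X : (ZMod p)[X]) (Polynomial.C a) p
  rw [sub_pow_char, ← h]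
  congr 1
  refine Finset.sum_congr rfl fun i hi => ?_
  rw [← Polynomial.C_pow, mul_comm, Polynomial.C_mul_X_pow_eq_monomial]

theorem tri_p_sub_one_one_sq (p : ℕ) [Fact p.Prime] (hp : p ≠ 2) (c : ZMod p)
    (hsq : IsSquare (c ^ 2 - 4)) (hne : c ^ 2 - 4 ≠ 0) :
    triCoeff (ZMod p) c (p - 1) 1 = 0 := by
  obtain ⟨s, hs⟩ := hsq
  have hprime : p.Prime := Fact.out
  have hp3 : 3 ≤ p := by
    have h2 := hprime.two_le
    rcases Nat.lt_or_ge p 3 with h | h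
    · interval_cases p <;> simp_all
    · exact h
  have h2 : (2 : ZMod p) ≠ 0 := by
    have : ((2 : ℕ) : ZMod p) ≠ 0 := by
      rw [Ne, ZMod.natCast_eq_zero_iff]
      intro h
      exact hp ((Nat.prime_dvd_prime_iff_eq hprime Nat.prime_two).mp h)
    simpa using this
  have hs0 : s ≠ 0 := by rintro rfl; simp at hs; exact hne hs
  obtain ⟨a, b, hab, hsum, hba⟩ :
      ∃ a b : ZMod p, a * b = 1 ∧ a + b = -c ∧ b - a ≠ 0 := by
    refine ⟨(s - c) / 2, (-s - c) / 2, ?_, ?_, ?_⟩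
    · field_simp
      ring_nf
      linear_combination hs
    · field_simp
      ring
    · have h : (-s - c) / 2 - (s - c) / 2 = -s := by field_simp; ring
      rw [h]
      exact neg_ne_zero.mpr hs0
  have ha0 : a ≠ 0 := left_ne_zero_of_mul_eq_one hab
  have hb0 : b ≠ 0 := right_ne_zero_of_mul_eq_one hab
  have hquad : (Polynomial.X ^ 2 + Polynomial.C c * Polynomial.X + 1 : (ZMod p)[X]) =
      (Polynomial.X - Polynomial.C a) * (Polynomial.X - Polynomial.C b) := by
    have h1 : (Polynomial.C a) * Polynomial.C b = (1 : (ZMod p)[X]) := by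
      rw [← map_mul, hab, map_one]
    have h2' : (Polynomial.C a) + Polynomial.C b = -Polynomial.C c := by
      rw [← map_add, hsum, map_neg]
    linear_combination (Polynomial.X : (ZMod p)[X]) * h2' - h1
  have key : triCoeff (ZMod p) c (p-1) 1 =
      ((Polynomial.X ^ 2 + Polynomial.C c * Polynomial.X + 1 : (ZMod p)[X]) ^ (p-1)).coeff p := by
    rw [triCoeff, factor_laurent, mul_pow, T_pow, ← map_pow, coeff_T_mul',
      show (-(((p-1 : ℕ) : ℤ) * (-1)) + 1 : ℤ) = ((p : ℕ) : ℤ) by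
        push_cast [hprime.one_lt.le]; ring,
      coeff_toLaurent']
  rw [key, hquad, mul_pow, pow_eq_sum', pow_eq_sum', Polynomial.coeff_mul,
    Finset.Nat.sum_antidiagonal_eq_sum_range_succ_mk]
  obtain ⟨m, rfl⟩ : ∃ m, p = m + 2 := ⟨p - 2, by omega⟩
  simp only [Polynomial.finset_sum_coeff, Polynomial.coeff_monomial,
    Finset.sum_ite_eq', Finset.mem_range]
  rw [Finset.sum_range_succ, Finset.sum_range_succ']
  simp only [Nat.sub_self, Nat.sub_zero, lt_self_iff_false, if_false, mul_zero, zero_mul,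
    add_zero]
  have hterm : ∀ k ∈ Finset.range (m + 1),
      ((if k + 1 < m + 2 then a ^ (m + 2 - 1 - (k + 1)) else 0) *
        if m + 2 - (k + 1) < m + 2 then b ^ (m + 2 - 1 - (m + 2 - (k + 1))) else 0) =
      b ^ k * a ^ (m + 1 - 1 - k) := by
    intro k hk
    rw [Finset.mem_range] at hk
    rw [if_pos (by omega), if_pos (by omega),
      show m + 2 - 1 - (k + 1) = m + 1 - 1 - k by omega,
      show m + 2 - 1 - (m + 2 - (k + 1)) = k by omega, mul_comm]
  rw [Finset.sum_congr rfl hterm]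
  have hg := geom_sum₂_mul b a (m + 1)
  have hap : a ^ (m + 1) = 1 := by
    simpa using ZMod.pow_card_sub_one_eq_one ha0
  have hbp : b ^ (m + 1) = 1 := by
    simpa using ZMod.pow_card_sub_one_eq_one hb0
  rw [hap, hbp, sub_self] at hg
  rcases mul_eq_zero.mp hg with h | h
  · exact h
  · exact absurd h hba
end

section
/- Let p be an odd prime and c ∈ F_p with c ≠ ±2 and c^2 - 4 a nonsquare in F_p. Then the trinomial coefficient T(p-2,0), computed in F_p, equals -c/(c^2-4). -/
open Finset LaurentPolynomial

section Aux

variable (p : ℕ) [Fact p.Prime]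

/-- Evaluation of a Laurent polynomial at a unit of `ZMod p`. -/
noncomputable def lev (u : (ZMod p)ˣ) : LaurentPolynomial (ZMod p) →ₐ[ZMod p] ZMod p :=
  AddMonoidAlgebra.lift (ZMod p) (ZMod p) ℤ
    ((Units.coeHom (ZMod p)).comp (zpowersHom (ZMod p)ˣ u))

lemma lev_T (u : (ZMod p)ˣ) (n : ℤ) : lev p u (T n) = ((u ^ n : (ZMod p)ˣ) : ZMod p) := by
  rw [lev, T, AddMonoidAlgebra.lift_single]
  simp

lemma lev_C (u : (ZMod p)ˣ) (a : ZMod p) : lev p u (C a) = a := by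
  rw [lev, ← single_eq_C, AddMonoidAlgebra.lift_single]
  simp

lemma lev_apply (u : (ZMod p)ˣ) (f : LaurentPolynomial (ZMod p)) :
    lev p u f = ∑ k ∈ f.coeff.support, f.coeff k * ((u ^ k : (ZMod p)ˣ) : ZMod p) := by
  rw [lev, AddMonoidAlgebra.lift_apply]
  rw [Finsupp.sum]
  refine Finset.sum_congr rfl fun k _ => ?_
  simp [smul_eq_mul]

lemma sum_units_eq (G : ZMod p → ZMod p) :
    ∑ u : (ZMod p)ˣ, G ↑u = (∑ x : ZMod p, G x) - G 0 := by
  classical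
  have himg : (univ : Finset (ZMod p)) = insert 0 (univ.image (Units.val : (ZMod p)ˣ → ZMod p)) := by
    ext x
    simp only [mem_univ, true_iff, mem_insert, mem_image, true_and]
    by_cases hx : x = 0
    · exact Or.inl hx
    · obtain ⟨u, hu⟩ := isUnit_iff_ne_zero.mpr hx
      exact Or.inr ⟨u, hu⟩
  have h0 : (0 : ZMod p) ∉ univ.image (Units.val : (ZMod p)ˣ → ZMod p) := by
    simp only [mem_image, mem_univ, true_and, not_exists]
    exact fun u => Units.ne_zero u
  have := congrArg (fun s : Finset (ZMod p) => ∑ x ∈ s, G x) himg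
  rw [Finset.sum_insert h0, Finset.sum_image (fun u _ v _ h => Units.ext h)] at this
  rw [this]
  ring

lemma sum_pow_field (m : ℕ) :
    ∑ x : ZMod p, x ^ m = (if m = 0 then 1 else 0) + (if (p - 1) ∣ m then -1 else 0) := by
  classical
  have h := FiniteField.sum_pow_units (ZMod p) m
  rw [ZMod.card] at h
  have h2 := sum_units_eq p (fun x => x ^ m)
  rw [h, zero_pow_eq] at h2
  linear_combination -h2

lemma sum_zpow (k : ℤ) (hk : |k| < (p : ℤ) - 1) :
    ∑ u : (ZMod p)ˣ, ((u ^ k : (ZMod p)ˣ) : ZMod p) = if k = 0 then -1 else 0 := by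
  classical
  have hp2 : 2 ≤ p := (Fact.out : p.Prime).two_le
  have hcast : ((p : ℤ) - 1) = ((p - 1 : ℕ) : ℤ) := by
    rw [Nat.cast_sub (show 1 ≤ p by omega)]; push_cast; ring
  have hp1 : (0 : ℤ) < (p : ℤ) - 1 := by
    have : (2 : ℤ) ≤ (p : ℤ) := by exact_mod_cast hp2
    linarith
  set m : ℕ := (k % ((p : ℤ) - 1)).toNat with hm
  have hmval : (m : ℤ) = k % ((p : ℤ) - 1) :=
    Int.toNat_of_nonneg (Int.emod_nonneg k (by linarith))
  have hmlt : (m : ℤ) < (p : ℤ) - 1 := by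
    rw [hmval]; exact Int.emod_lt_of_pos k hp1
  have hpow : ∀ u : (ZMod p)ˣ, u ^ k = u ^ m := by
    intro u
    have h1 : u ^ ((p : ℤ) - 1) = (1 : (ZMod p)ˣ) := by
      rw [hcast, zpow_natCast]
      exact ZMod.units_pow_card_sub_one_eq_one p u
    conv_lhs => rw [← Int.mul_ediv_add_emod k ((p : ℤ) - 1)]
    rw [zpow_add, zpow_mul, h1, one_zpow, one_mul, ← hmval, zpow_natCast]
  simp_rw [hpow]
  have h := FiniteField.sum_pow_units (ZMod p) m
  rw [ZMod.card] at h
  have hconv : ∀ u : (ZMod p)ˣ, ((u ^ m : (ZMod p)ˣ) : ZMod p) = ((u : ZMod p)) ^ m := by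
    intro u; exact Units.val_pow_eq_pow_val u m
  simp_rw [hconv]
  rw [h]
  congr 1
  have hiff : (p - 1) ∣ m ↔ k = 0 := by
    constructor
    · intro hd
      have hm0 : m = 0 := by
        rcases Nat.eq_zero_or_pos m with h0 | h0
        · exact h0
        · exfalso
          have := Nat.le_of_dvd h0 hd
          have : ((p - 1 : ℕ) : ℤ) ≤ (m : ℤ) := by exact_mod_cast this
          omega
      have hk0 : k % ((p : ℤ) - 1) = 0 := by rw [← hmval, hm0]; rfl
      have hdvd : ((p : ℤ) - 1) ∣ k := Int.dvd_of_emod_eq_zero hk0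
      by_contra hne
      have := Int.le_of_dvd (abs_pos.mpr hne) ((dvd_abs _ _).mpr hdvd)
      omega
    · intro hk0
      subst hk0
      have : m = 0 := by
        have : (m : ℤ) = 0 := by rw [hmval]; simp
        exact_mod_cast this
      rw [this]
      exact dvd_zero _
  simp [hiff]

lemma supp_bound {R : Type*} [CommRing R] (c : R) (n : ℕ) :
    ∀ k ∈ (((T 1 + C c + T (-1)) ^ n : LaurentPolynomial R)).coeff.support, |k| ≤ (n : ℤ) := by
  classical
  induction n with
  | zero =>
    intro k hk
    rw [pow_zero] at hk
    have : k ∈ (Finsupp.single (0 : ℤ) (1 : R)).support := hk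
    have := Finsupp.support_single_subset this
    simp only [Finset.mem_singleton] at this
    simp [this]
  | succ n ih =>
    intro k hk
    rw [pow_succ] at hk
    have hmem := AddMonoidAlgebra.support_coeff_mul_subset _ _ hk
    rw [Finset.mem_add] at hmem
    obtain ⟨a, ha, b, hb, rfl⟩ := hmem
    have h1 := ih a ha
    have hsub : ((T 1 + C c + T (-1) : LaurentPolynomial R)).coeff.support ⊆ ({1, 0, -1} : Finset ℤ) := by
      intro x hx
      have hx1 := Finsupp.support_add (g₁ := (T 1 + C c : LaurentPolynomial R).coeff) (g₂ := (T (-1) : LaurentPolynomial R).coeff) hx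
      rw [Finset.mem_union] at hx1
      rcases hx1 with hx1 | hx1
      · have hx2 := Finsupp.support_add (g₁ := (T 1 : LaurentPolynomial R).coeff) (g₂ := (C c : LaurentPolynomial R).coeff) hx1
        rw [Finset.mem_union] at hx2
        rcases hx2 with hx2 | hx2
        · have := Finsupp.support_single_subset hx2
          simp only [Finset.mem_singleton] at this
          simp [this]
        · have : x ∈ (Finsupp.single (0 : ℤ) c).support := by
            exact hx2
          have := Finsupp.support_single_subset this
          simp only [Finset.mem_singleton] at this
          simp [this]
      · have := Finsupp.support_single_subset hx1
        simp only [Finset.mem_singleton] at this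
        simp [this]
    have h2 : b ∈ ({1, 0, -1} : Finset ℤ) := hsub hb
    simp only [Finset.mem_insert, Finset.mem_singleton] at h2
    have hb1 : |b| ≤ 1 := by rcases h2 with rfl | rfl | rfl <;> simp
    calc |a + b| ≤ |a| + |b| := abs_add_le a b
      _ ≤ (n : ℤ) + 1 := add_le_add h1 hb1
      _ = ((n + 1 : ℕ) : ℤ) := by push_cast; ring

lemma sum_lev (f : LaurentPolynomial (ZMod p))
    (hf : ∀ k ∈ f.coeff.support, |k| < (p : ℤ) - 1) :
    ∑ u : (ZMod p)ˣ, lev p u f = - f.coeff 0 := by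
  classical
  simp_rw [lev_apply]
  rw [Finset.sum_comm]
  have hstep : ∀ k ∈ f.coeff.support,
      ∑ u : (ZMod p)ˣ, f.coeff k * ((u ^ k : (ZMod p)ˣ) : ZMod p)
        = if k = 0 then - f.coeff k else 0 := by
    intro k hk
    rw [← Finset.mul_sum, sum_zpow p k (hf k hk)]
    by_cases h : k = 0 <;> simp [h]
  rw [Finset.sum_congr rfl hstep]
  rw [Finset.sum_ite_eq' f.coeff.support 0 (fun k => - f.coeff k)]
  by_cases h0 : (0 : ℤ) ∈ f.coeff.support
  · rw [if_pos h0]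
  · rw [if_neg h0, Finsupp.notMem_support_iff.mp h0, neg_zero]

lemma choose_cast : ∀ j : ℕ, j + 2 ≤ p → (((p - 2).choose j : ℕ) : ZMod p) = (-1) ^ j * (j + 1) := by
  intro j
  induction j with
  | zero => intro _; simp
  | succ j ih =>
    intro hj
    have hj' : j + 2 ≤ p := by omega
    have ihv := ih hj'
    have key := Nat.choose_succ_right_eq (p - 2) j
    have hcast := congrArg (fun t : ℕ => (t : ZMod p)) key
    simp only [Nat.cast_mul] at hcast
    have hsub : ((p - 2 - j : ℕ) : ZMod p) = -(j + 2) := by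
      have h1 : ((p - 2 - j : ℕ) : ZMod p) = ((p - (j + 2) : ℕ) : ZMod p) := by
        congr 1; omega
      rw [h1, Nat.cast_sub (by omega)]
      push_cast
      rw [ZMod.natCast_self]
      ring
    rw [hsub, ihv] at hcast
    have hne : ((j : ZMod p) + 1) ≠ 0 := by
      have : ((j + 1 : ℕ) : ZMod p) ≠ 0 := by
        rw [Ne, ZMod.natCast_eq_zero_iff]
        intro hd
        have := Nat.le_of_dvd (by omega) hd
        omega
      push_cast at this
      exact this
    have hcast' : (((p - 2).choose (j + 1) : ℕ) : ZMod p) * ((j : ZMod p) + 1)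
        = ((-1) ^ (j + 1) * ((j : ZMod p) + 1 + 1)) * ((j : ZMod p) + 1) := by
      push_cast at hcast ⊢
      rw [hcast]
      ring
    have := mul_right_cancel₀ hne hcast'
    rw [this]
    push_cast
    ring

lemma pow_card_sub_two (z : ZMod p) (hz : z ≠ 0) : z ^ (p - 2) = z⁻¹ := by
  have hp2 : 2 ≤ p := (Fact.out : p.Prime).two_le
  have h1 : z ^ (p - 2) * z = 1 := by
    have : z ^ (p - 2) * z = z ^ (p - 1) := by
      rw [← pow_succ]
      congr 1
      omega
    rw [this]
    exact ZMod.pow_card_sub_one_eq_one hz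
  field_simp at h1 ⊢
  linear_combination h1

lemma sum_inv_sq_add (hp : p ≠ 2) (d : ZMod p) (hd' : (-d) ^ (p / 2) = -1) :
    ∑ y : ZMod p, (y ^ 2 + d)⁻¹ = (2 * d)⁻¹ := by
  classical
  have hprime : p.Prime := Fact.out
  have hodd : p % 2 = 1 := hprime.eq_two_or_odd.resolve_left hp
  have hp3 : 3 ≤ p := by have := hprime.two_le; omega
  set k := p / 2 with hkdef
  have hk2 : 2 * k = p - 1 := by omega
  have hk1 : 1 ≤ k := by omega
  have hkp : k + 2 ≤ p := by omega
  have h2ne : (2 : ZMod p) ≠ 0 := by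
    have h : ((2 : ℕ) : ZMod p) ≠ 0 := by
      rw [Ne, ZMod.natCast_eq_zero_iff]
      intro hd
      exact hp ((Nat.prime_dvd_prime_iff_eq hprime Nat.prime_two).mp hd)
    exact_mod_cast h
  have hne1 : (1 : ZMod p) ≠ -1 := by
    intro h
    apply h2ne
    linear_combination h
  have hd0 : d ≠ 0 := by
    intro h
    rw [h, neg_zero, zero_pow (by omega : p / 2 ≠ 0)] at hd'
    exact one_ne_zero (by linear_combination hd' : (1 : ZMod p) = 0)
  have hden : ∀ y : ZMod p, y ^ 2 + d ≠ 0 := by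
    intro y h
    have hy : y ≠ 0 := by
      rintro rfl
      apply hd0
      linear_combination h
    have hnd : -d = y ^ 2 := by linear_combination -h
    rw [hnd, ← pow_mul] at hd'
    have h1 : y ^ (2 * (p / 2)) = 1 := by
      rw [← hkdef, hk2]
      exact ZMod.pow_card_sub_one_eq_one hy
    rw [h1] at hd'
    exact hne1 hd'
  have hinv : ∀ y : ZMod p, (y ^ 2 + d)⁻¹ = (y ^ 2 + d) ^ (p - 2) :=
    fun y => (pow_card_sub_two p _ (hden y)).symm
  simp_rw [hinv]
  have hexp : ∀ y : ZMod p, (y ^ 2 + d) ^ (p - 2)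
      = ∑ j ∈ range (p - 1), (y ^ 2) ^ j * d ^ (p - 2 - j) * ((p - 2).choose j : ZMod p) := by
    intro y
    rw [add_pow]
    have : p - 2 + 1 = p - 1 := by omega
    rw [this]
  simp_rw [hexp]
  rw [Finset.sum_comm]
  have hterm : ∀ j ∈ range (p - 1),
      ∑ y : ZMod p, (y ^ 2) ^ j * d ^ (p - 2 - j) * ((p - 2).choose j : ZMod p)
        = ((if 2 * j = 0 then 1 else 0) + (if (p - 1) ∣ 2 * j then -1 else 0))
            * (d ^ (p - 2 - j) * ((p - 2).choose j : ZMod p)) := by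
    intro j _
    simp_rw [← pow_mul, mul_assoc]
    rw [← Finset.sum_mul, sum_pow_field p (2 * j)]
  rw [Finset.sum_congr rfl hterm]
  have h0 : ∀ j ∈ range (p - 1), j ≠ k →
      ((if 2 * j = 0 then 1 else 0) + (if (p - 1) ∣ 2 * j then -1 else 0))
          * (d ^ (p - 2 - j) * ((p - 2).choose j : ZMod p)) = 0 := by
    intro j hj hjk
    rw [mem_range] at hj
    by_cases hj0 : j = 0
    · subst hj0
      simp
    · have hnd : ¬ (p - 1) ∣ 2 * j := by
        rintro ⟨t, ht⟩
        rcases t with _ | _ | t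
        · omega
        · omega
        · have hge : (p - 1) * 2 ≤ (p - 1) * (t + 1 + 1) := Nat.mul_le_mul_left _ (by omega)
          have h2j : (p - 1) * 2 ≤ 2 * j := ht ▸ hge
          omega
      rw [if_neg (by omega : ¬ 2 * j = 0), if_neg hnd]
      norm_num
  have h1 : k ∉ range (p - 1) →
      ((if 2 * k = 0 then 1 else 0) + (if (p - 1) ∣ 2 * k then -1 else 0))
          * (d ^ (p - 2 - k) * ((p - 2).choose k : ZMod p)) = 0 := by
    intro hk
    exact absurd (mem_range.mpr (by omega)) hk
  rw [Finset.sum_eq_single k h0 h1]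
  rw [if_neg (by omega : ¬ 2 * k = 0), if_pos ⟨1, by omega⟩]
  rw [choose_cast p k hkp]
  have hexp2 : p - 2 - k = k - 1 := by omega
  rw [hexp2]
  have hdk : d ^ (k - 1) * d = d ^ k := by
    rw [← pow_succ]
    congr 1
    omega
  have hsq1 : ((-1 : ZMod p) ^ k) * ((-1 : ZMod p) ^ k) = 1 := by
    rw [← pow_add]
    exact Even.neg_one_pow ⟨k, rfl⟩
  have hdkv : d ^ k = (-1 : ZMod p) ^ k * (-1) := by
    have h := hd'
    rw [neg_pow] at h
    calc d ^ k = ((-1 : ZMod p) ^ k * (-1 : ZMod p) ^ k) * d ^ k := by rw [hsq1, one_mul]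
      _ = (-1 : ZMod p) ^ k * ((-1 : ZMod p) ^ (p / 2) * d ^ (p / 2)) := by rw [← hkdef]; ring
      _ = (-1 : ZMod p) ^ k * (-1) := by rw [h]
  have h2k : (2 : ZMod p) * ((k : ZMod p) + 1) = 1 := by
    have h := congrArg (fun t : ℕ => (t : ZMod p)) (show 2 * (k + 1) = p + 1 by omega)
    push_cast at h
    rw [ZMod.natCast_self] at h
    linear_combination h
  refine eq_inv_of_mul_eq_one_left ?_
  calc (0 + -1) * (d ^ (k - 1) * ((-1 : ZMod p) ^ k * ((k : ZMod p) + 1))) * (2 * d)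
      = (d ^ (k - 1) * d) * ((-1 : ZMod p) ^ k) * (-(2 * ((k : ZMod p) + 1))) := by ring
    _ = ((-1 : ZMod p) ^ k * (-1)) * ((-1 : ZMod p) ^ k) * (-(2 * ((k : ZMod p) + 1))) := by
        rw [hdk, hdkv]
    _ = ((-1 : ZMod p) ^ k * (-1 : ZMod p) ^ k) * ((2 : ZMod p) * ((k : ZMod p) + 1)) := by ring
    _ = 1 := by rw [hsq1, h2k, one_mul]

end Aux

theorem tri_p_sub_two_zero_nonsq (p : ℕ) [Fact p.Prime] (hp : p ≠ 2) (c : ZMod p)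
    (hc2 : c ≠ 2) (hc2' : c ≠ -2) (hsq : ¬ IsSquare (c ^ 2 - 4)) :
    triCoeff (ZMod p) c (p - 2) 0 = -c / (c ^ 2 - 4) := by
  classical
  have hprime : p.Prime := Fact.out
  have hp3 : 3 ≤ p := by
    have h2 := hprime.two_le
    omega
  have h2ne : (2 : ZMod p) ≠ 0 := by
    have h : ((2 : ℕ) : ZMod p) ≠ 0 := by
      rw [Ne, ZMod.natCast_eq_zero_iff]
      intro hd
      exact hp ((Nat.prime_dvd_prime_iff_eq hprime Nat.prime_two).mp hd)
    exact_mod_cast h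
  have h4ne : (4 : ZMod p) ≠ 0 := by
    have h : (4 : ZMod p) = 2 * 2 := by norm_num
    rw [h]
    exact mul_ne_zero h2ne h2ne
  have hDne : c ^ 2 - 4 ≠ 0 := by
    intro h
    exact hsq (by rw [h]; exact ⟨0, by ring⟩)
  have h4mc : (4 : ZMod p) - c ^ 2 ≠ 0 := by
    intro h
    apply hDne
    linear_combination -h
  have hden : ∀ x : ZMod p, x ^ 2 + c * x + 1 ≠ 0 := by
    intro x h
    exact hsq ⟨2 * x + c, by linear_combination -4 * h⟩
  set d : ZMod p := (4 - c ^ 2) / 4 with hd_def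
  have hndd : -d = (c ^ 2 - 4) / 4 := by
    rw [hd_def, ← neg_div]
    ring_nf
  have hxne : (c ^ 2 - 4) / 4 ≠ 0 := div_ne_zero hDne h4ne
  have hnsq : ¬ IsSquare ((c ^ 2 - 4) / 4) := by
    rintro ⟨r, hr⟩
    rw [div_eq_iff h4ne] at hr
    exact hsq ⟨2 * r, by linear_combination hr⟩
  have hd' : (-d) ^ (p / 2) = -1 := by
    rw [hndd]
    rcases ZMod.pow_div_two_eq_neg_one_or_one p hxne with h | h
    · exact absurd ((ZMod.euler_criterion p hxne).mpr h) hnsq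
    · exact h
  have hsum := sum_inv_sq_add p hp d hd'
  have hQ : ∑ x : ZMod p, x / (x ^ 2 + c * x + 1) = c / (c ^ 2 - 4) := by
    have hshift : ∑ x : ZMod p, x / (x ^ 2 + c * x + 1)
        = ∑ y : ZMod p, (y - c / 2) / (y ^ 2 + d) := by
      rw [← Equiv.sum_comp (Equiv.subRight (c / 2)) (fun x => x / (x ^ 2 + c * x + 1))]
      refine Finset.sum_congr rfl fun y _ => ?_
      have he : (Equiv.subRight (c / 2)) y = y - c / 2 := rfl
      rw [he]
      congr 1
      rw [hd_def]
      field_simp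
      ring
    rw [hshift]
    have hsplit : ∀ y : ZMod p, (y - c / 2) / (y ^ 2 + d)
        = y * (y ^ 2 + d)⁻¹ - (c / 2) * (y ^ 2 + d)⁻¹ := by
      intro y
      rw [div_eq_mul_inv]
      ring
    simp_rw [hsplit]
    rw [Finset.sum_sub_distrib, ← Finset.mul_sum]
    have hasym : ∑ y : ZMod p, y * (y ^ 2 + d)⁻¹ = 0 := by
      have hcomp : ∑ y : ZMod p, y * (y ^ 2 + d)⁻¹
          = ∑ y : ZMod p, (-y) * ((-y) ^ 2 + d)⁻¹ := by
        rw [← Equiv.sum_comp (Equiv.neg (ZMod p)) (fun y => y * (y ^ 2 + d)⁻¹)]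
        rfl
      have hptw : ∀ y : ZMod p, (-y) * ((-y) ^ 2 + d)⁻¹ = -(y * (y ^ 2 + d)⁻¹) := by
        intro y
        rw [neg_sq]
        ring
      simp_rw [hptw] at hcomp
      rw [Finset.sum_neg_distrib] at hcomp
      have h2S : (2 : ZMod p) * (∑ y : ZMod p, y * (y ^ 2 + d)⁻¹) = 0 := by
        linear_combination hcomp
      exact (mul_eq_zero.mp h2S).resolve_left h2ne
    rw [hasym, hsum, zero_sub, hd_def]
    field_simp
    ring
  set f : LaurentPolynomial (ZMod p) := (T 1 + C c + T (-1)) ^ (p - 2) with hfdef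
  have hsupp : ∀ k ∈ f.coeff.support, |k| < (p : ℤ) - 1 := by
    intro k hk
    have h1 := supp_bound c (p - 2) k hk
    have h2 : ((p - 2 : ℕ) : ℤ) < (p : ℤ) - 1 := by
      rw [Nat.cast_sub (by omega : 2 ≤ p)]
      have : (3 : ℤ) ≤ (p : ℤ) := by exact_mod_cast hp3
      push_cast
      linarith
    exact lt_of_le_of_lt h1 h2
  have hkey := sum_lev p f hsupp
  have heval : ∀ u : (ZMod p)ˣ,
      lev p u f = (↑u : ZMod p) / ((↑u : ZMod p) ^ 2 + c * ↑u + 1) := by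
    intro u
    have hu : (↑u : ZMod p) ≠ 0 := Units.ne_zero u
    rw [hfdef, map_pow, map_add, map_add, lev_T, lev_T, lev_C]
    have e1 : ((u ^ (1 : ℤ) : (ZMod p)ˣ) : ZMod p) = ↑u := by norm_num
    have e2 : ((u ^ (-1 : ℤ) : (ZMod p)ˣ) : ZMod p) = (↑u : ZMod p)⁻¹ := by
      rw [zpow_neg, zpow_one]
      exact Units.val_inv_eq_inv_val u
    rw [e1, e2]
    have ha : ((↑u : ZMod p) + c + (↑u : ZMod p)⁻¹)
        = ((↑u : ZMod p) ^ 2 + c * ↑u + 1) / ↑u := by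
      field_simp
    rw [ha, pow_card_sub_two p _ (div_ne_zero (hden ↑u) hu), inv_div]
  have hsum2 : ∑ u : (ZMod p)ˣ, lev p u f = c / (c ^ 2 - 4) := by
    simp_rw [heval]
    have h := sum_units_eq p (fun x => x / (x ^ 2 + c * x + 1))
    rw [h, hQ]
    norm_num
  rw [hsum2] at hkey
  have hfc : triCoeff (ZMod p) c (p - 2) 0 = f.coeff 0 := rfl
  rw [hfc]
  linear_combination hkey
end
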